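/- Let n ≥ 1, let P be a Young diagram of order n with offset a = (#P)/n, and let k ∈ {1,...,n}. Then P admits a balanced semistandard {1,...,n}-filling that is α_i-codominant for all i = 1, ..., k−1, if and only if a is an integer and the row lengths satisfy #_k P ≥ a ≥ #_{n−k+1} P. -/

import Mathlib

/-- A Young diagram of order `n`, given by its (weakly decreasing) row lengths,
vanishing from row `n` on. Rows are indexed from `0`. -/
def IsYoung (n : ℕ) (P : ℕ → ℕ) : Prop :=
  (∀ i, P (i + 1) ≤ P i) ∧ ∀ i, n ≤ i → P i = 0

/-- The total number of boxes of a Young diagram of order `n`. -/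
def ysize (n : ℕ) (P : ℕ → ℕ) : ℕ := ∑ i ∈ Finset.range n, P i

/-- The height of the `j`-th column (columns indexed from `0`). -/
def colH (n : ℕ) (P : ℕ → ℕ) (j : ℕ) : ℕ :=
  ((Finset.range n).filter (fun i => j < P i)).card

/-- The number of boxes of the skew diagram `P/Q`. -/
def skewSize (n : ℕ) (P Q : ℕ → ℕ) : ℕ := ∑ i ∈ Finset.range n, (P i - Q i)

/-- The skew diagram `P/Q` has thickness at most `m`: every column has at most
`m` boxes. -/
def ThickLE (n : ℕ) (P Q : ℕ → ℕ) (m : ℕ) : Prop :=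
  ∀ j, colH n P j ≤ colH n Q j + m

/-- `T` is a semistandard filling of the skew diagram `P/Q`: rows weakly increase
from left to right, columns strictly increase from top to bottom.
`T i j` is the entry in row `i`, column `j`. -/
def SkewSemistd (P Q : ℕ → ℕ) (T : ℕ → ℕ → ℕ) : Prop :=
  (∀ i j, Q i ≤ j → j + 1 < P i → T i j ≤ T i (j + 1)) ∧
  (∀ i j, Q i ≤ j → j < P (i + 1) → T i j < T (i + 1) j)

/-- All entries of the filling `T` of `P/Q` belong to the alphabet `{lo, …, hi}`. -/
def InAlpha (P Q : ℕ → ℕ) (T : ℕ → ℕ → ℕ) (lo hi : ℕ) : Prop :=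
  ∀ i j, Q i ≤ j → j < P i → lo ≤ T i j ∧ T i j ≤ hi

/-- The number of occurrences of the symbol `s` among the first `j` columns of the
filling `T` of `P/Q`. -/
def cntCols (n : ℕ) (P Q : ℕ → ℕ) (T : ℕ → ℕ → ℕ) (s : ℕ) (j : ℕ) : ℕ :=
  ∑ i ∈ Finset.range n, ((Finset.Ico (Q i) (min j (P i))).filter (fun c => T i c = s)).card

/-- The total number of occurrences of the symbol `s` in the filling `T` of `P/Q`. -/
def cntAll (n : ℕ) (P Q : ℕ → ℕ) (T : ℕ → ℕ → ℕ) (s : ℕ) : ℕ :=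
  ∑ i ∈ Finset.range n, ((Finset.Ico (Q i) (P i)).filter (fun c => T i c = s)).card

/-- The filling `T` of `P/Q` is balanced with respect to the alphabet `{lo, …, hi}`:
each symbol occurs exactly `(#P/Q)/(hi+1-lo)` times. -/
def BalancedF (n : ℕ) (P Q : ℕ → ℕ) (T : ℕ → ℕ → ℕ) (lo hi : ℕ) : Prop :=
  ∀ s, lo ≤ s → s ≤ hi → (hi + 1 - lo) * cntAll n P Q T s = skewSize n P Q

/-- The filling `T` of `P/Q` is `α_i`-codominant: among the first `j` columns there
are at least as many occurrences of `i+1` as of `i`, for every `j`. -/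
def Codom (n : ℕ) (P Q : ℕ → ℕ) (T : ℕ → ℕ → ℕ) (i : ℕ) : Prop :=
  ∀ j, cntCols n P Q T i j ≤ cntCols n P Q T (i + 1) j

/-- The length of the bridge at height `i` (for `1 ≤ i ≤ n`) of the skew diagram
`P/Q`: the number of columns whose height in `Q` is `i-1` and in `P` is `i`. -/
def bridge (n : ℕ) (P Q : ℕ → ℕ) (i : ℕ) : ℕ :=
  ((Finset.range (P 0)).filter (fun j => colH n Q j = i - 1 ∧ colH n P j = i)).card

open Finset

section FWD

lemma anti_of_succ {f : ℕ → ℕ} (h : ∀ i, f (i+1) ≤ f i) : ∀ {i i'}, i ≤ i' → f i' ≤ f i := by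
  intro i i' hii
  induction i' with
  | zero => have : i = 0 := by omega
            subst this; exact le_rfl
  | succ m ih =>
    rcases Nat.lt_or_ge i (m+1) with hlt | hge
    · exact le_trans (h m) (ih (by omega))
    · have : i = m + 1 := by omega
      subst this; exact le_rfl

lemma colH_lt_iff {n : ℕ} {P : ℕ → ℕ} (hP : IsYoung n P) (j i : ℕ) :
    i < colH n P j ↔ (i < n ∧ j < P i) := by
  constructor
  · intro h
    by_contra hc
    push_neg at hc
    have hsub : (Finset.range n).filter (fun i' => j < P i') ⊆ Finset.range i := by
      intro x hx
      simp only [mem_filter, mem_range] at hx ⊢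
      by_contra hxi
      push_neg at hxi
      have : P x ≤ P i := anti_of_succ hP.1 hxi
      rcases Nat.lt_or_ge i n with h1 | h1
      · have := hc h1; omega
      · have : P i = 0 := hP.2 i h1; omega
    have := Finset.card_le_card hsub
    simp only [card_range] at this
    unfold colH at h; omega
  · rintro ⟨h1, h2⟩
    have hsub : Finset.range (i+1) ⊆ (Finset.range n).filter (fun i' => j < P i') := by
      intro x hx
      simp only [mem_range] at hx
      simp only [mem_filter, mem_range]
      have : P i ≤ P x := anti_of_succ hP.1 (by omega)
      omega
    have := Finset.card_le_card hsub
    simp only [card_range] at this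
    unfold colH; omega

lemma colH_le {n : ℕ} (P : ℕ → ℕ) (j : ℕ) : colH n P j ≤ n := by
  simpa [colH] using Finset.card_filter_le (Finset.range n) _

variable {n k : ℕ} {P : ℕ → ℕ} {T : ℕ → ℕ → ℕ}

lemma row_mono (hP : IsYoung n P) (hss : SkewSemistd P (fun _ => 0) T) :
    ∀ i c c', c ≤ c' → c' < P i → T i c ≤ T i c' := by
  intro i c c' hcc hc'
  obtain ⟨d, rfl⟩ : ∃ d, c' = c + d := ⟨c' - c, by omega⟩
  clear hcc
  induction d with
  | zero => exact le_rfl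
  | succ m ih =>
    have h1 : c + m + 1 < P i := by omega
    exact le_trans (ih (by omega)) (hss.1 i (c + m) (Nat.zero_le _) (by omega))

lemma col_chain (hP : IsYoung n P) (hss : SkewSemistd P (fun _ => 0) T) :
    ∀ i d j, j < P (i + d) → T i j + d ≤ T (i + d) j := by
  intro i d
  induction d with
  | zero => intro j _; simp
  | succ m ih =>
    intro j hj
    rw [show i + (m+1) = i + m + 1 from rfl] at hj ⊢
    have h2 : j < P (i + m) := lt_of_lt_of_le hj (anti_of_succ hP.1 (by omega))
    have h3 := hss.2 (i + m) j (Nat.zero_le _) hj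
    have := ih j h2
    omega

lemma cell_ge (hP : IsYoung n P) (hss : SkewSemistd P (fun _ => 0) T)
    (hal : InAlpha P (fun _ => 0) T 1 n) :
    ∀ i j, j < P i → i + 1 ≤ T i j := by
  intro i j hj
  have h0 : j < P 0 := lt_of_lt_of_le hj (anti_of_succ hP.1 (Nat.zero_le i))
  have h1 : 1 ≤ T 0 j := (hal 0 j (Nat.zero_le _) h0).1
  have h2 := col_chain hP hss 0 i j (by simpa using hj)
  rw [Nat.zero_add] at h2
  omega

lemma top_le (hP : IsYoung n P) (hss : SkewSemistd P (fun _ => 0) T)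
    (hal : InAlpha P (fun _ => 0) T 1 n) :
    ∀ j, j < P 0 → T 0 j + colH n P j ≤ n + 1 := by
  intro j hj
  set H := colH n P j with hH
  have hn' : 0 < n := by
    by_contra h
    have : P 0 = 0 := hP.2 0 (by omega)
    omega
  have hH1 : 1 ≤ H := by
    rw [hH]
    have := (colH_lt_iff hP j 0).mpr ⟨hn', hj⟩
    omega
  have hcell : j < P (H - 1) := ((colH_lt_iff hP j (H - 1)).mp (by omega)).2
  have h1 := col_chain hP hss 0 (H - 1) j (by simpa using hcell)
  rw [Nat.zero_add] at h1
  have h2 : T (H - 1) j ≤ n := (hal (H - 1) j (Nat.zero_le _) hcell).2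
  omega

lemma cntCols_le_col (hP : IsYoung n P) (hss : SkewSemistd P (fun _ => 0) T) :
    ∀ s j, cntCols n P (fun _ => 0) T s j ≤ j := by
  intro s j
  have hcard : cntCols n P (fun _ => 0) T s j
      = ((Finset.range n).sigma
          (fun i => (Finset.Ico 0 (min j (P i))).filter (fun c => T i c = s))).card := by
    rw [Finset.card_sigma]
    rfl
  rw [hcard]
  have := Finset.card_le_card_of_injOn (f := fun p => p.2)
    (s := (Finset.range n).sigma (fun i => (Finset.Ico 0 (min j (P i))).filter (fun c => T i c = s)))
    (t := Finset.range j) ?_ ?_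
  · rw [Finset.card_range] at this; exact this
  · intro p hp
    simp only [Finset.mem_coe, Finset.mem_sigma, Finset.mem_filter, Finset.mem_Ico] at hp
    simp only [Finset.mem_coe, Finset.mem_range]
    omega
  · intro p hp q hq hpq
    simp only [Finset.mem_coe, Finset.mem_sigma, Finset.mem_filter, Finset.mem_Ico] at hp hq
    change p.2 = q.2 at hpq
    have hc1 : p.2 < P p.1 := by omega
    have hc2 : q.2 < P q.1 := by omega
    have key : p.1 = q.1 := by
      by_contra hne
      rcases Nat.lt_or_ge p.1 q.1 with hlt | hge
      · have := col_chain hP hss p.1 (q.1 - p.1) p.2 (by rw [show p.1 + (q.1 - p.1) = q.1 by omega]; rw [hpq]; exact hc2)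
        rw [show p.1 + (q.1 - p.1) = q.1 by omega, hpq] at this
        have e1 : T p.1 p.2 = s := hp.2.2
        have e2 : T q.1 q.2 = s := hq.2.2
        rw [hpq] at e1
        omega
      · have hlt : q.1 < p.1 := by omega
        have := col_chain hP hss q.1 (p.1 - q.1) q.2 (by rw [show q.1 + (p.1 - q.1) = p.1 by omega]; rw [← hpq]; exact hc1)
        rw [show q.1 + (p.1 - q.1) = p.1 by omega, ← hpq] at this
        have e1 : T p.1 p.2 = s := hp.2.2
        have e2 : T q.1 q.2 = s := hq.2.2
        rw [← hpq] at e2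
        omega
    exact Sigma.ext key (by simp [hpq])

end FWD

section FWD2

variable {n k : ℕ} {P : ℕ → ℕ} {T : ℕ → ℕ → ℕ}

lemma downclosed_eq_range {S : Finset ℕ} (h : ∀ j ∈ S, ∀ j' ≤ j, j' ∈ S) :
    S = Finset.range S.card := by
  have h1 : ∀ j ∈ S, j < S.card := by
    intro j hj
    have hsub : Finset.range (j+1) ⊆ S := fun x hx => h j hj x (by simpa using Nat.lt_succ_iff.mp (Finset.mem_range.mp hx))
    have := Finset.card_le_card hsub
    simp only [Finset.card_range] at this; omega
  apply Finset.eq_of_subset_of_card_le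
  · intro x hx; exact Finset.mem_range.mpr (h1 x hx)
  · simp

lemma forward_main (hn : 1 ≤ n) (hk1 : 1 ≤ k) (hkn : k ≤ n)
    (hP : IsYoung n P) (hss : SkewSemistd P (fun _ => 0) T)
    (hal : InAlpha P (fun _ => 0) T 1 n)
    (hbal : BalancedF n P (fun _ => 0) T 1 n)
    (hcod : ∀ i, 1 ≤ i → i < k → Codom n P (fun _ => 0) T i) :
    ∃ a : ℕ, ysize n P = n * a ∧ P (n - k) ≤ a ∧ a ≤ P (k - 1) := by
  classical
  set a := cntAll n P (fun _ => 0) T 1 with ha_def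
  have hsize : skewSize n P (fun _ => 0) = ysize n P := by simp [skewSize, ysize]
  have hmain : n * a = ysize n P := by
    have := hbal 1 le_rfl hn
    rw [hsize] at this
    simpa using this
  have halls : ∀ s, 1 ≤ s → s ≤ n → cntAll n P (fun _ => 0) T s = a := by
    intro s h1 h2
    have e1 := hbal s h1 h2
    have e2 := hbal 1 le_rfl hn
    rw [← e2] at e1
    simp only [Nat.add_sub_cancel] at e1
    exact Nat.eq_of_mul_eq_mul_left (by omega) e1
  -- row-0 analysis
  set A := (Finset.Ico 0 (P 0)).filter (fun c => T 0 c = 1) with hA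
  have hcard : a = A.card := by
    rw [ha_def]
    unfold cntAll
    rw [Finset.sum_eq_single_of_mem 0 (Finset.mem_range.mpr (by omega))]
    intro i hi hne
    rw [Finset.card_eq_zero, Finset.filter_eq_empty_iff]
    intro c hc
    simp only [Finset.mem_Ico] at hc
    have := cell_ge hP hss hal i c hc.2
    omega
  have hAdc : A = Finset.range a := by
    rw [hcard]
    apply downclosed_eq_range
    intro c hc c' hc'
    simp only [hA, Finset.mem_filter, Finset.mem_Ico] at hc ⊢
    have hcP : c < P 0 := hc.1.2
    have h1 : T 0 c' ≤ T 0 c := row_mono hP hss 0 c' c hc' hcP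
    have h2 : 1 ≤ T 0 c' := (hal 0 c' (Nat.zero_le _) (by omega)).1
    exact ⟨⟨Nat.zero_le _, by omega⟩, by omega⟩
  have hrow0 : ∀ c, c < a → T 0 c = 1 ∧ c < P 0 := by
    intro c hc
    have : c ∈ A := by rw [hAdc]; exact Finset.mem_range.mpr hc
    simp only [hA, Finset.mem_filter, Finset.mem_Ico] at this
    exact ⟨this.2, this.1.2⟩
  have haP0 : a ≤ P 0 := by
    rcases Nat.eq_zero_or_pos a with h0 | hpos
    · omega
    · have := (hrow0 (a-1) (by omega)).2
      omega
  have hcc1 : ∀ j, j ≤ a → j ≤ cntCols n P (fun _ => 0) T 1 j := by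
    intro j hj
    have hterm : ((Finset.Ico ((fun _ => (0:ℕ)) 0) (min j (P 0))).filter (fun c => T 0 c = 1)).card = j := by
      have hmin : min j (P 0) = j := by omega
      have : (Finset.Ico (0:ℕ) (min j (P 0))).filter (fun c => T 0 c = 1) = Finset.Ico 0 j := by
        rw [hmin]
        apply Finset.filter_eq_self.mpr
        intro c hc
        simp only [Finset.mem_Ico] at hc
        exact (hrow0 c (by omega)).1
      simpa using congrArg Finset.card this
    calc j = _ := hterm.symm
    _ ≤ cntCols n P (fun _ => 0) T 1 j := by
        unfold cntCols
        exact Finset.single_le_sum (f := fun i => ((Finset.Ico ((fun _ => (0:ℕ)) i) (min j (P i))).filter (fun c => T i c = 1)).card)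
          (fun i _ => Nat.zero_le _) (Finset.mem_range.mpr (by omega))
  have hchain : ∀ s, 1 ≤ s → s ≤ k → ∀ j,
      cntCols n P (fun _ => 0) T 1 j ≤ cntCols n P (fun _ => 0) T s j := by
    intro s
    induction s with
    | zero => intro h; omega
    | succ m ih =>
      intro h1 h2 j
      rcases Nat.eq_zero_or_pos m with h0 | hm
      · subst h0; exact le_rfl
      · exact le_trans (ih hm (by omega) j) (hcod m hm (by omega) j)
  have hccleall : ∀ s j, cntCols n P (fun _ => 0) T s j ≤ cntAll n P (fun _ => 0) T s := by
    intro s j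
    apply Finset.sum_le_sum
    intro i _
    apply Finset.card_le_card
    apply Finset.filter_subset_filter
    apply Finset.Ico_subset_Ico le_rfl
    omega
  have hnotail : ∀ s, 1 ≤ s → s ≤ k → ∀ i c, a ≤ c → c < P i → T i c ≠ s := by
    intro s hs1 hsk i c hac hcP hTeq
    have hin : i < n := by
      by_contra hcon
      have : P i = 0 := hP.2 i (by omega)
      omega
    have e1 : a ≤ cntCols n P (fun _ => 0) T s a :=
      le_trans (hcc1 a le_rfl) (hchain s hs1 hsk a)
    have e3 : cntAll n P (fun _ => 0) T s = a := halls s hs1 (le_trans hsk hkn)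
    have hstrict : cntCols n P (fun _ => 0) T s a < cntAll n P (fun _ => 0) T s := by
      unfold cntCols cntAll
      apply Finset.sum_lt_sum
      · intro i' _
        apply Finset.card_le_card
        apply Finset.filter_subset_filter
        apply Finset.Ico_subset_Ico le_rfl
        omega
      · refine ⟨i, Finset.mem_range.mpr hin, ?_⟩
        apply Finset.card_lt_card
        constructor
        · apply Finset.filter_subset_filter
          apply Finset.Ico_subset_Ico le_rfl
          omega
        · intro hsub
          have hc1 : c ∈ (Finset.Ico ((fun _ => (0:ℕ)) i) (P i)).filter (fun c' => T i c' = s) := by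
            simp only [Finset.mem_filter, Finset.mem_Ico]
            exact ⟨⟨Nat.zero_le _, hcP⟩, hTeq⟩
          have hc2 := hsub hc1
          simp only [Finset.mem_filter, Finset.mem_Ico] at hc2
          omega
    have := hccleall s a
    omega
  have hka : a ≤ P (k - 1) := by
    rcases Nat.eq_zero_or_pos a with h0 | hpos
    · omega
    set j := a - 1 with hjdef
    have hexists : ∀ s, 1 ≤ s → s ≤ k → ∃ i, i < n ∧ j < P i ∧ T i j = s := by
      intro s hs1 hsk
      have l1 : cntCols n P (fun _ => 0) T s j ≤ j := cntCols_le_col hP hss s j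
      have l2 : a ≤ cntCols n P (fun _ => 0) T s (j+1) := by
        have u1 := hcc1 (j+1) (by omega)
        have u2 := hchain s hs1 hsk (j+1)
        omega
      have hlt : cntCols n P (fun _ => 0) T s j < cntCols n P (fun _ => 0) T s (j+1) := by omega
      by_contra hno
      push_neg at hno
      apply absurd hlt
      apply not_lt.mpr
      unfold cntCols
      apply Finset.sum_le_sum
      intro i hi
      apply Finset.card_le_card
      intro c hc
      simp only [Finset.mem_filter, Finset.mem_Ico] at hc ⊢
      have hcj : c ≠ j := by
        intro hceq
        subst hceq
        exact hno i (Finset.mem_range.mp hi) (by omega) hc.2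
      refine ⟨⟨Nat.zero_le _, by omega⟩, hc.2⟩
    set g : ℕ → ℕ := fun s => if h : (1 ≤ s ∧ s ≤ k) then (hexists s h.1 h.2).choose else 0 with hgdef
    have hg : ∀ s, 1 ≤ s → s ≤ k → g s < n ∧ j < P (g s) ∧ T (g s) j = s := by
      intro s h1 h2
      have : g s = (hexists s h1 h2).choose := by simp [hgdef, h1, h2]
      rw [this]
      exact (hexists s h1 h2).choose_spec
    have hcle : k ≤ colH n P j := by
      have := Finset.card_le_card_of_injOn (f := g) (s := Finset.Icc 1 k)
        (t := (Finset.range n).filter (fun i => j < P i)) ?_ ?_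
      · simpa [colH] using this
      · intro s hs
        simp only [Finset.mem_coe, Finset.mem_Icc] at hs
        obtain ⟨w1, w2, w3⟩ := hg s hs.1 hs.2
        simp only [Finset.mem_coe, Finset.mem_filter, Finset.mem_range]
        exact ⟨w1, w2⟩
      · intro s hs s' hs' heq
        simp only [Finset.mem_coe, Finset.mem_Icc] at hs hs'
        obtain ⟨_, _, w3⟩ := hg s hs.1 hs.2
        obtain ⟨_, _, w3'⟩ := hg s' hs'.1 hs'.2
        rw [heq] at w3
        omega
    have : j < P (k-1) := ((colH_lt_iff hP j (k-1)).mp (by omega)).2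
    omega
  have hnk : P (n - k) ≤ a := by
    by_contra hcon
    push_neg at hcon
    have hP0 : a < P 0 := lt_of_lt_of_le hcon (anti_of_succ hP.1 (Nat.zero_le _))
    have hH : n - k < colH n P a := (colH_lt_iff hP a (n-k)).mpr ⟨by omega, hcon⟩
    have htop := top_le hP hss hal a hP0
    have hs1 : 1 ≤ T 0 a := (hal 0 a (Nat.zero_le _) hP0).1
    have hsk : T 0 a ≤ k := by
      have hc := colH_le (n := n) P a
      omega
    exact hnotail (T 0 a) hs1 hsk 0 a le_rfl hP0 rfl
  exact ⟨a, hmain.symm, hnk, hka⟩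

end FWD2

lemma colH_eq_zero {n : ℕ} {P : ℕ → ℕ} (hP : IsYoung n P) {j : ℕ} (h : P 0 ≤ j) :
    colH n P j = 0 := by
  unfold colH
  rw [Finset.card_eq_zero, Finset.filter_eq_empty_iff]
  intro x _
  have : P x ≤ P 0 := anti_of_succ hP.1 (Nat.zero_le x)
  omega


lemma colH_anti {n : ℕ} (P : ℕ → ℕ) (j : ℕ) : colH n P (j+1) ≤ colH n P j := by
  apply Finset.card_le_card
  intro x hx
  simp only [Finset.mem_filter] at hx ⊢
  exact ⟨hx.1, by omega⟩

lemma sum_rows_eq_sum_cols (n W : ℕ) (m : ℕ → ℕ) (hm : ∀ i, i < n → m i ≤ W)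
    (Qc : ℕ → ℕ → Prop) [∀ i c, Decidable (Qc i c)] :
    ∑ i ∈ Finset.range n, ((Finset.Ico 0 (m i)).filter (fun c => Qc i c)).card
      = ∑ c ∈ Finset.range W, ((Finset.range n).filter (fun i => c < m i ∧ Qc i c)).card := by
  set S := (Finset.range n ×ˢ Finset.range W).filter (fun p => p.2 < m p.1 ∧ Qc p.1 p.2) with hS
  have h1 : S.card = ∑ i ∈ Finset.range n, ((Finset.Ico 0 (m i)).filter (fun c => Qc i c)).card := by
    rw [Finset.card_eq_sum_card_fiberwise (f := Prod.fst) (t := Finset.range n)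
      (by intro x hx; simp only [hS, Finset.mem_coe, Finset.mem_filter, Finset.mem_product] at hx; exact hx.1.1)]
    apply Finset.sum_congr rfl
    intro i hi
    simp only [Finset.mem_range] at hi
    rw [← Finset.card_image_of_injOn (f := Prod.snd)]
    · congr 1
      ext c
      simp only [Finset.mem_image, hS, Finset.mem_filter, Finset.mem_product, Finset.mem_range,
        Finset.mem_Ico]
      constructor
      · rintro ⟨⟨i', c'⟩, ⟨⟨⟨hi', hc'⟩, hcm, hq⟩, hfst⟩, rfl⟩
        simp only at hfst hcm hq ⊢
        subst hfst
        exact ⟨⟨Nat.zero_le _, hcm⟩, hq⟩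
      · rintro ⟨⟨_, hcm⟩, hq⟩
        exact ⟨(i, c), ⟨⟨⟨hi, lt_of_lt_of_le hcm (hm i hi)⟩, hcm, hq⟩, rfl⟩, rfl⟩
    · intro p hp q hq hpq
      have e1 : p.1 = i := (Finset.mem_filter.mp hp).2
      have e2 : q.1 = i := (Finset.mem_filter.mp hq).2
      exact Prod.ext (e1.trans e2.symm) hpq
  have h2 : S.card = ∑ c ∈ Finset.range W, ((Finset.range n).filter (fun i => c < m i ∧ Qc i c)).card := by
    rw [Finset.card_eq_sum_card_fiberwise (f := Prod.snd) (t := Finset.range W)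
      (by intro x hx; simp only [hS, Finset.mem_coe, Finset.mem_filter, Finset.mem_product] at hx; exact hx.1.2)]
    apply Finset.sum_congr rfl
    intro c hc
    rw [← Finset.card_image_of_injOn (f := Prod.fst)]
    · congr 1
      ext i
      simp only [Finset.mem_image, hS, Finset.mem_filter, Finset.mem_product, Finset.mem_range]
      constructor
      · rintro ⟨⟨i', c'⟩, ⟨⟨⟨hi', hc'⟩, hcm, hq⟩, hsnd⟩, rfl⟩
        simp only at hsnd hcm hq ⊢
        subst hsnd
        exact ⟨hi', hcm, hq⟩
      · rintro ⟨hi, hcm, hq⟩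
        simp only [Finset.mem_range] at hc
        exact ⟨(i, c), ⟨⟨⟨hi, hc⟩, hcm, hq⟩, rfl⟩, rfl⟩
    · intro p hp q hq hpq
      exact Prod.ext hpq ((Finset.mem_filter.mp hp).2.trans (Finset.mem_filter.mp hq).2.symm)
  omega


structure InvG (n k a : ℕ) (P : ℕ → ℕ) (s : ℕ) (g : ℕ → ℕ) : Prop where
  mono : ∀ j, g (j+1) ≤ g j
  le_h : ∀ j, g j ≤ colH n P j
  sum : ∑ j ∈ Finset.range (P 0), g j = s * a
  ub : ∀ j, g j ≤ s
  lo : ∀ j, j < a → min s k ≤ g j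
  hi : ∀ j, a ≤ j → g j ≤ s - min s k

lemma step_ex {n k a : ℕ} {P : ℕ → ℕ} (hP : IsYoung n P) (hk1 : 1 ≤ k) (ha1 : 1 ≤ a)
    (haW : a ≤ P 0) {s : ℕ} {g : ℕ → ℕ} (hI : InvG n k a P (s+1) g) :
    ∃ g', InvG n k a P s g' ∧ (∀ j, g' j ≤ g j) ∧ (∀ j, g j ≤ g' j + 1) := by
  classical
  obtain ⟨gmono, gleh, gsum, gub, glo, ghi⟩ := hI
  set W := P 0 with hW
  set fl := min s k with hfl
  have hfls : fl ≤ s := min_le_left s k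
  set cap := s + 1 - fl with hcap
  have hcap1 : 1 ≤ cap := by omega
  set f : ℕ → ℕ := fun j => if j < a then fl else 0 with hf
  set σ : ℕ → ℕ := fun j => g j - f j with hσ
  have hflmin : fl ≤ min (s+1) k := by
    simp only [hfl]; omega
  have gzero : ∀ j, W ≤ j → g j = 0 := by
    intro j hj
    have h1 := gleh j
    have h2 := colH_eq_zero hP (j := j) hj
    omega
  have hfle : ∀ j, f j ≤ g j := by
    intro j
    by_cases hja : j < a
    · have h1 := glo j hja
      simp only [hf, if_pos hja]
      omega
    · simp only [hf, if_neg hja]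
      omega
  have hσcap : ∀ j, σ j ≤ cap := by
    intro j
    by_cases hja : j < a
    · have := gub j
      simp only [hσ, hf, if_pos hja]
      omega
    · have := ghi j (by omega)
      have hm : 1 ≤ min (s+1) k := by omega
      simp only [hσ, hf, if_neg hja]
      omega
  have hfsum : ∑ j ∈ Finset.range W, f j = fl * a := by
    have h1 : ∀ j ∈ Finset.range W, f j = if j < a then fl else 0 := by
      intro j _; simp only [hf]
    rw [Finset.sum_congr rfl h1, Finset.sum_ite, Finset.sum_const, Finset.sum_const]
    have h2 : (Finset.range W).filter (fun j => j < a) = Finset.range a := by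
      ext x
      simp only [Finset.mem_filter, Finset.mem_range]
      omega
    rw [h2]
    simp [Nat.mul_comm]
  have hσsum : ∑ j ∈ Finset.range W, σ j = cap * a := by
    have h1 : ∀ j ∈ Finset.range W, σ j = g j - f j := by
      intro j _; simp only [hσ]
    rw [Finset.sum_congr rfl h1, Finset.sum_tsub_distrib _ (fun j _ => hfle j), gsum, hfsum,
      hcap, Nat.sub_mul]
  set cnt : ℕ → ℕ := fun v => ((Finset.range W).filter (fun j => v ≤ σ j)).card with hcnt
  have hcnt_anti : ∀ v v', v ≤ v' → cnt v' ≤ cnt v := by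
    intro v v' hvv
    simp only [hcnt]
    apply Finset.card_le_card
    intro j hj
    simp only [Finset.mem_filter] at hj ⊢
    exact ⟨hj.1, by omega⟩
  have hcnt1 : a ≤ cnt 1 := by
    have h1 : ∑ j ∈ Finset.range W, σ j ≤ cnt 1 * cap := by
      rw [← Finset.sum_filter_add_sum_filter_not (Finset.range W) (fun j => 1 ≤ σ j)]
      have h2 : ∑ j ∈ (Finset.range W).filter (fun j => ¬ 1 ≤ σ j), σ j = 0 := by
        apply Finset.sum_eq_zero
        intro j hj
        simp only [Finset.mem_filter] at hj
        omega
      rw [h2, Nat.add_zero]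
      have h3 := Finset.sum_le_card_nsmul ((Finset.range W).filter (fun j => 1 ≤ σ j)) σ cap
        (fun j _ => hσcap j)
      simp only [smul_eq_mul] at h3
      exact h3
    have h4 : cap * a ≤ cap * cnt 1 := by
      calc cap * a = ∑ j ∈ Finset.range W, σ j := hσsum.symm
      _ ≤ cnt 1 * cap := h1
      _ = cap * cnt 1 := Nat.mul_comm _ _
    exact Nat.le_of_mul_le_mul_left h4 (by omega)
  set τ := Nat.findGreatest (fun v => a ≤ cnt v) cap with hτ
  have hτ1 : 1 ≤ τ := Nat.le_findGreatest hcap1 hcnt1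
  have hτcap : τ ≤ cap := Nat.findGreatest_le cap
  have hτspec : a ≤ cnt τ := Nat.findGreatest_spec (P := fun v => a ≤ cnt v) hcap1 hcnt1
  set q := cnt (τ + 1) with hqd
  have hq : q < a := by
    rcases Nat.lt_or_ge τ cap with hlt | hge
    · have h5 := Nat.findGreatest_is_greatest
        (by omega : Nat.findGreatest (fun v => a ≤ cnt v) cap < τ + 1) (by omega)
      simp only [not_le] at h5
      omega
    · have hτeq : τ = cap := by omega
      have h6 : cnt (τ + 1) = 0 := by
        simp only [hcnt]
        rw [Finset.card_eq_zero, Finset.filter_eq_empty_iff]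
        intro j _
        have := hσcap j
        omega
      omega
  set ties := (Finset.range W).filter (fun j => σ j = τ) with hties
  have htsub : ties ⊆ Finset.range W := by
    rw [hties]; exact Finset.filter_subset _ _
  have hsplit : cnt τ = q + ties.card := by
    have hdisj : Disjoint ((Finset.range W).filter (fun j => τ + 1 ≤ σ j))
        ((Finset.range W).filter (fun j => σ j = τ)) := by
      rw [Finset.disjoint_left]
      intro j hj1 hj2
      simp only [Finset.mem_filter] at hj1 hj2
      omega
    have h1 : (Finset.range W).filter (fun j => τ ≤ σ j)
        = (Finset.range W).filter (fun j => τ + 1 ≤ σ j)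
          ∪ (Finset.range W).filter (fun j => σ j = τ) := by
      rw [← Finset.filter_or]
      apply Finset.filter_congr
      intro j _
      omega
    simp only [hcnt, hqd, hties, hcnt]
    rw [h1, Finset.card_union_of_disjoint hdisj]
  set cntP : ℕ → ℕ := fun c => q + (ties.filter (fun j => c ≤ j)).card with hcntP
  have hcntP0 : a ≤ cntP 0 := by
    have h1 : ties.filter (fun j => 0 ≤ j) = ties := by
      apply Finset.filter_eq_self.mpr
      intro j _
      omega
    simp only [hcntP, h1]
    omega
  have hcntPW : cntP W < a := by
    have h1 : ties.filter (fun j => W ≤ j) = ∅ := by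
      rw [Finset.filter_eq_empty_iff]
      intro j hj
      have := Finset.mem_range.mp (htsub hj)
      omega
    simp only [hcntP, h1]
    simpa using hq
  have hcntP_anti : ∀ c c', c ≤ c' → cntP c' ≤ cntP c := by
    intro c c' hcc
    simp only [hcntP]
    have h1 : ties.filter (fun j => c' ≤ j) ⊆ ties.filter (fun j => c ≤ j) := by
      intro j hj
      simp only [Finset.mem_filter] at hj ⊢
      exact ⟨hj.1, by omega⟩
    have := Finset.card_le_card h1
    omega
  set cstar := Nat.findGreatest (fun c => a ≤ cntP c) W with hcstar
  have hc1 : a ≤ cntP cstar := Nat.findGreatest_spec (P := fun c => a ≤ cntP c) (Nat.zero_le W) hcntP0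
  have hc2 : cntP (cstar + 1) < a := by
    rcases Nat.lt_or_ge cstar W with hlt | hge
    · have h5 := Nat.findGreatest_is_greatest
        (by omega : Nat.findGreatest (fun c => a ≤ cntP c) W < cstar + 1) (by omega)
      simp only [not_le] at h5
      omega
    · have := hcntP_anti W (cstar + 1) (by omega)
      omega
  have hdrop : cntP cstar ≤ cntP (cstar + 1) + 1 := by
    simp only [hcntP]
    have hsub : ties.filter (fun j => cstar ≤ j)
        ⊆ insert cstar (ties.filter (fun j => cstar + 1 ≤ j)) := by
      intro j hj
      simp only [Finset.mem_filter] at hj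
      rcases Nat.eq_or_lt_of_le hj.2 with heq | hlt
      · exact Finset.mem_insert.mpr (Or.inl heq.symm)
      · exact Finset.mem_insert.mpr (Or.inr (Finset.mem_filter.mpr ⟨hj.1, by omega⟩))
    have h1 := Finset.card_le_card hsub
    have h2 := Finset.card_insert_le cstar (ties.filter (fun j => cstar + 1 ≤ j))
    omega
  have hcntPeq : cntP cstar = a := by omega
  set C := ((Finset.range W).filter (fun j => τ + 1 ≤ σ j)) ∪ (ties.filter (fun j => cstar ≤ j))
    with hC
  have hCdisj : Disjoint ((Finset.range W).filter (fun j => τ + 1 ≤ σ j))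
      (ties.filter (fun j => cstar ≤ j)) := by
    rw [Finset.disjoint_left]
    intro j hj1 hj2
    simp only [Finset.mem_filter] at hj1
    simp only [hties, Finset.mem_filter] at hj2
    omega
  have hCcard : C.card = a := by
    rw [hC, Finset.card_union_of_disjoint hCdisj]
    have h1 : ((Finset.range W).filter (fun j => τ + 1 ≤ σ j)).card = q := by
      simp only [hqd, hcnt]
    have h2 := hcntPeq
    simp only [hcntP] at h2
    omega
  have hCW : C ⊆ Finset.range W := by
    rw [hC]
    apply Finset.union_subset
    · exact Finset.filter_subset _ _
    · exact (Finset.filter_subset _ _).trans htsub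
  have hCσ : ∀ j ∈ C, τ ≤ σ j := by
    intro j hj
    rw [hC, Finset.mem_union] at hj
    rcases hj with hj | hj
    · simp only [Finset.mem_filter] at hj
      omega
    · have := Finset.mem_filter.mp ((Finset.filter_subset _ _) hj)
      simp only [hties, Finset.mem_filter] at hj
      omega
  have hCg : ∀ j ∈ C, f j + 1 ≤ g j := by
    intro j hj
    have h1 := hCσ j hj
    have h2 := hfle j
    simp only [hσ] at h1
    omega
  have hcapC : ∀ j, j < W → σ j = cap → j ∈ C := by
    intro j hjW hjcap
    rcases Nat.lt_or_ge τ cap with hlt | hge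
    · rw [hC, Finset.mem_union]
      left
      simp only [Finset.mem_filter, Finset.mem_range]
      exact ⟨hjW, by omega⟩
    · have hτeq : τ = cap := by omega
      have hge2 : cap * cnt cap ≤ cap * a := by
        have h1 : cnt cap * cap ≤ ∑ j' ∈ (Finset.range W).filter (fun j' => cap ≤ σ j'), σ j' := by
          have := Finset.card_nsmul_le_sum ((Finset.range W).filter (fun j' => cap ≤ σ j')) σ cap
            (fun x hx => (Finset.mem_filter.mp hx).2)
          simp only [smul_eq_mul] at this
          simp only [hcnt]
          exact this
        have h2 : ∑ j' ∈ (Finset.range W).filter (fun j' => cap ≤ σ j'), σ j'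
            ≤ ∑ j' ∈ Finset.range W, σ j' :=
          Finset.sum_le_sum_of_subset (Finset.filter_subset _ _)
        rw [hσsum] at h2
        calc cap * cnt cap = cnt cap * cap := Nat.mul_comm _ _
        _ ≤ cap * a := le_trans h1 h2
      have hcntcap : cnt cap ≤ a := Nat.le_of_mul_le_mul_left hge2 (by omega)
      have hcnteq : cnt τ = a := by
        have h7 := hτspec
        rw [hτeq] at h7 ⊢
        omega
      have htcard : ties.card = a - q := by omega
      have hfull : ties.filter (fun j' => cstar ≤ j') = ties := by
        apply Finset.eq_of_subset_of_card_le (Finset.filter_subset _ _)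
        have h3 := hcntPeq
        simp only [hcntP] at h3
        omega
      rw [hC, Finset.mem_union]
      right
      rw [hfull]
      simp only [hties, Finset.mem_filter, Finset.mem_range]
      exact ⟨hjW, by omega⟩
  set g' : ℕ → ℕ := fun j => if j ∈ C then g j - 1 else g j with hg'
  have hg'le : ∀ j, g' j ≤ g j := by
    intro j
    simp only [hg']
    split <;> omega
  have hg'ge : ∀ j, g j ≤ g' j + 1 := by
    intro j
    simp only [hg']
    split <;> omega
  refine ⟨g', ?_, hg'le, hg'ge⟩
  constructor
  -- mono
  · intro j
    by_cases h1 : j ∈ C <;> by_cases h2 : (j+1) ∈ C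
    · simp only [hg', if_pos h1, if_pos h2]
      have := gmono j
      omega
    · simp only [hg', if_pos h1, if_neg h2]
      have hmono := gmono j
      rcases Nat.lt_or_ge (g (j+1)) (g j) with hlt | hge
      · omega
      · exfalso
        have hgeq : g (j+1) = g j := by omega
        have hσj : τ ≤ σ j := hCσ j h1
        have hfanti : f (j+1) ≤ f j := by
          simp only [hf]
          split <;> split <;> omega
        have hσmono : σ j ≤ σ (j+1) := by
          simp only [hσ, hgeq]
          omega
        have hj1W : j + 1 < W := by
          by_contra hcon
          have := gzero (j+1) (by omega)
          have := hCg j h1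
          have := hfle j
          omega
        rcases Nat.lt_or_ge τ (σ (j+1)) with hgt | hle2
        · apply h2
          rw [hC, Finset.mem_union]
          left
          simp only [Finset.mem_filter, Finset.mem_range]
          exact ⟨hj1W, by omega⟩
        · have hσj1 : σ (j+1) = τ := by omega
          have hσjτ : σ j = τ := by omega
          have hjties : j ∈ ties.filter (fun j' => cstar ≤ j') := by
            rw [hC, Finset.mem_union] at h1
            rcases h1 with h1 | h1
            · simp only [Finset.mem_filter] at h1
              omega
            · exact h1
          simp only [hties, Finset.mem_filter] at hjties
          apply h2
          rw [hC, Finset.mem_union]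
          right
          simp only [hties, Finset.mem_filter, Finset.mem_range]
          exact ⟨⟨hj1W, hσj1⟩, by omega⟩
    · simp only [hg', if_neg h1, if_pos h2]
      have := gmono j
      omega
    · simp only [hg', if_neg h1, if_neg h2]
      exact gmono j
  -- le_h
  · intro j
    exact le_trans (hg'le j) (gleh j)
  -- sum
  · have hpt : ∀ j ∈ Finset.range W, g' j = g j - (if j ∈ C then 1 else 0) := by
      intro j _
      simp only [hg']
      split <;> omega
    rw [Finset.sum_congr rfl hpt]
    rw [Finset.sum_tsub_distrib _ (by
      intro j hj
      split
      · next h => have := hCg j h; omega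
      · omega)]
    rw [gsum]
    have h1 : ∑ j ∈ Finset.range W, (if j ∈ C then (1:ℕ) else 0) = a := by
      rw [Finset.sum_ite_mem]
      rw [Finset.inter_eq_right.mpr hCW]
      simpa using hCcard
    rw [h1]
    have h2 : (s+1) * a = s * a + a := by ring
    omega
  -- ub
  · intro j
    have hub := gub j
    rcases Nat.lt_or_ge (g j) (s+1) with hlt | hge
    · have := hg'le j
      omega
    · have hgj : g j = s + 1 := by omega
      have hja : j < a := by
        by_contra hcon
        have h3 := ghi j (by omega)
        have h4 : 1 ≤ min (s+1) k := by omega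
        omega
      have hjW : j < W := by
        by_contra hcon
        have := gzero j (by omega)
        omega
      have hσj : σ j = cap := by
        simp only [hσ, hf, if_pos hja, hgj, hcap]
      have hjC := hcapC j hjW hσj
      simp only [hg', if_pos hjC]
      omega
  -- lo
  · intro j hja
    by_cases hjC : j ∈ C
    · have h3 := hCg j hjC
      simp only [hf, if_pos hja] at h3
      simp only [hg', if_pos hjC, hfl] at *
      omega
    · have := glo j hja
      simp only [hg', if_neg hjC]
      omega
  -- hi
  · intro j hja
    have hold := ghi j hja
    rcases Nat.lt_or_ge s k with hsk | hks
    · have h3 : min (s+1) k = s+1 := by omega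
      rw [h3] at hold
      have hg0 : g j = 0 := by omega
      have := hg'le j
      omega
    · have hflk : fl = k := by simp only [hfl]; omega
      have h3 : min (s+1) k = k := by omega
      rw [h3] at hold
      rcases Nat.lt_or_ge (g j) (s + 1 - k) with hlt | hge
      · have h4 := hg'le j
        have h5 : min s k = k := by omega
        omega
      · have hgj : g j = s + 1 - k := by omega
        have hjW : j < W := by
          by_contra hcon
          have := gzero j (by omega)
          omega
        have hσj : σ j = cap := by
          simp only [hσ, hf, if_neg (by omega : ¬ j < a), hgj, hcap, hflk]
          omega
        have hjC := hcapC j hjW hσj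
        simp only [hg', if_pos hjC]
        have h5 : min s k = k := by omega
        omega


open Classical in
noncomputable def chainG (n k a : ℕ) (P : ℕ → ℕ) : ℕ → (ℕ → ℕ) :=
  fun d => Nat.rec (colH n P) (fun d' prev =>
    if h : ∃ g', InvG n k a P (n - (d'+1)) g' ∧ (∀ j, g' j ≤ prev j) ∧ (∀ j, prev j ≤ g' j + 1)
    then h.choose else prev) d

lemma chainG_zero (n k a : ℕ) (P : ℕ → ℕ) : chainG n k a P 0 = colH n P := rfl

open Classical in
lemma chainG_succ (n k a : ℕ) (P : ℕ → ℕ) (d : ℕ) :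
    chainG n k a P (d+1) =
      if h : ∃ g', InvG n k a P (n - (d+1)) g' ∧ (∀ j, g' j ≤ chainG n k a P d j)
          ∧ (∀ j, chainG n k a P d j ≤ g' j + 1)
      then h.choose else chainG n k a P d := rfl

section BWD

variable {n k a : ℕ} {P : ℕ → ℕ}

lemma inv_top (hn : 1 ≤ n) (hk1 : 1 ≤ k) (hkn : k ≤ n) (hP : IsYoung n P)
    (hsz : ysize n P = n * a) (hank : P (n - k) ≤ a) (hka : a ≤ P (k - 1)) :
    InvG n k a P n (colH n P) := by
  constructor
  · exact colH_anti P
  · intro j; exact le_rfl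
  · -- total size
    have h1 := sum_rows_eq_sum_cols n (P 0) P
      (fun i hi => anti_of_succ hP.1 (Nat.zero_le i)) (fun _ _ => True)
    have h2 : ∀ i ∈ Finset.range n, ((Finset.Ico 0 (P i)).filter (fun c => True)).card = P i := by
      intro i _
      rw [Finset.filter_true_of_mem (fun _ _ => trivial)]
      simp
    have h3 : ∀ c ∈ Finset.range (P 0),
        ((Finset.range n).filter (fun i => c < P i ∧ True)).card = colH n P c := by
      intro c _
      unfold colH
      congr 1
      apply Finset.filter_congr
      intro i _
      simp
    rw [Finset.sum_congr rfl h2, Finset.sum_congr rfl h3] at h1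
    rw [← h1]
    rw [← hsz]
    rfl
  · intro j; exact colH_le P j
  · intro j hja
    have hminnk : min n k = k := by omega
    rw [hminnk]
    have h1 : j < P (k-1) := by omega
    have := (colH_lt_iff hP j (k-1)).mpr ⟨by omega, h1⟩
    omega
  · intro j hja
    have hminnk : min n k = k := by omega
    rw [hminnk]
    by_contra hcon
    push_neg at hcon
    have h1 : n - k < colH n P j := by omega
    have := ((colH_lt_iff hP j (n-k)).mp h1).2
    omega

lemma chain_inv (hn : 1 ≤ n) (hk1 : 1 ≤ k) (hkn : k ≤ n) (hP : IsYoung n P) (ha1 : 1 ≤ a)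
    (hsz : ysize n P = n * a) (hank : P (n - k) ≤ a) (hka : a ≤ P (k - 1)) :
    ∀ d, d ≤ n → InvG n k a P (n - d) (chainG n k a P d) := by
  have haW : a ≤ P 0 := le_trans hka (anti_of_succ hP.1 (Nat.zero_le _))
  intro d
  induction d with
  | zero =>
    intro _
    simpa [chainG_zero] using inv_top hn hk1 hkn hP hsz hank hka
  | succ m ih =>
    intro hd
    have ihm := ih (by omega)
    have ihm' : InvG n k a P ((n - (m+1)) + 1) (chainG n k a P m) := by
      rw [show (n - (m+1)) + 1 = n - m by omega]
      exact ihm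
    have hex := step_ex hP hk1 ha1 haW ihm'
    show InvG n k a P (n - (m+1)) (chainG n k a P (m+1))
    rw [chainG_succ, dif_pos hex]
    exact hex.choose_spec.1

lemma chain_between (hn : 1 ≤ n) (hk1 : 1 ≤ k) (hkn : k ≤ n) (hP : IsYoung n P) (ha1 : 1 ≤ a)
    (hsz : ysize n P = n * a) (hank : P (n - k) ≤ a) (hka : a ≤ P (k - 1)) :
    ∀ d, d + 1 ≤ n → (∀ j, chainG n k a P (d+1) j ≤ chainG n k a P d j)
      ∧ (∀ j, chainG n k a P d j ≤ chainG n k a P (d+1) j + 1) := by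
  have haW : a ≤ P 0 := le_trans hka (anti_of_succ hP.1 (Nat.zero_le _))
  intro d hd
  have ihm := chain_inv hn hk1 hkn hP ha1 hsz hank hka d (by omega)
  have ihm' : InvG n k a P ((n - (d+1)) + 1) (chainG n k a P d) := by
    rw [show (n - (d+1)) + 1 = n - d by omega]
    exact ihm
  have hex := step_ex hP hk1 ha1 haW ihm'
  constructor
  · intro j
    rw [chainG_succ, dif_pos hex]
    exact hex.choose_spec.2.1 j
  · intro j
    rw [chainG_succ, dif_pos hex]
    exact hex.choose_spec.2.2 j

lemma chain_anti (hn : 1 ≤ n) (hk1 : 1 ≤ k) (hkn : k ≤ n) (hP : IsYoung n P) (ha1 : 1 ≤ a)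
    (hsz : ysize n P = n * a) (hank : P (n - k) ≤ a) (hka : a ≤ P (k - 1)) :
    ∀ d', d' ≤ n → ∀ d, d ≤ d' → ∀ j, chainG n k a P d' j ≤ chainG n k a P d j := by
  intro d'
  induction d' with
  | zero =>
    intro _ d hd j
    have : d = 0 := by omega
    subst this
    exact le_rfl
  | succ m ih =>
    intro hm d hd j
    rcases Nat.eq_or_lt_of_le hd with heq | hlt
    · subst heq; exact le_rfl
    · have h1 := (chain_between hn hk1 hkn hP ha1 hsz hank hka m (by omega)).1 j
      exact le_trans h1 (ih (by omega) d (by omega) j)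

end BWD


section BWDMAIN

variable {n k a : ℕ} {P : ℕ → ℕ}

lemma backward_main (hn : 1 ≤ n) (hk1 : 1 ≤ k) (hkn : k ≤ n) (hP : IsYoung n P)
    (hsz : ysize n P = n * a) (hank : P (n - k) ≤ a) (hka : a ≤ P (k - 1)) :
    ∃ T : ℕ → ℕ → ℕ, SkewSemistd P (fun _ => 0) T ∧ InAlpha P (fun _ => 0) T 1 n ∧
        BalancedF n P (fun _ => 0) T 1 n ∧
        ∀ i, 1 ≤ i → i < k → Codom n P (fun _ => 0) T i := by
  classical
  rcases Nat.eq_zero_or_pos a with ha0 | ha1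
  · -- degenerate case : the diagram is empty
    subst ha0
    have hPz : ∀ i, P i = 0 := by
      intro i
      rcases Nat.lt_or_ge i n with hin | hin
      · have h1 : ∑ i ∈ Finset.range n, P i = 0 := by
          have := hsz; unfold ysize at this; omega
        exact Finset.sum_eq_zero_iff.mp h1 i (Finset.mem_range.mpr hin)
      · exact hP.2 i hin
    refine ⟨fun _ _ => 1, ⟨?_, ?_⟩, ?_, ?_, ?_⟩
    · intro i j _ hj; have := hPz i; omega
    · intro i j _ hj; have := hPz (i+1); omega
    · intro i j _ hj; have := hPz i; omega
    · intro s h1 h2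
      have e1 : cntAll n P (fun _ => 0) (fun _ _ => 1) s = 0 := by
        unfold cntAll
        apply Finset.sum_eq_zero
        intro i _
        rw [hPz i]
        simp
      have e2 : skewSize n P (fun _ => 0) = 0 := by
        unfold skewSize
        apply Finset.sum_eq_zero
        intro i _
        simp [hPz i]
      rw [e1, e2, Nat.mul_zero]
    · intro i _ _ j
      have e : ∀ s, cntCols n P (fun _ => 0) (fun _ _ => 1) s j = 0 := by
        intro s
        unfold cntCols
        apply Finset.sum_eq_zero
        intro i' _
        rw [hPz i']
        simp
      rw [e i, e (i+1)]
  -- main case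
  have haW : a ≤ P 0 := le_trans hka (anti_of_succ hP.1 (Nat.zero_le _))
  set G : ℕ → ℕ → ℕ := fun s => chainG n k a P (n - s) with hG
  have hInv : ∀ s, s ≤ n → InvG n k a P s (G s) := by
    intro s hs
    have := chain_inv hn hk1 hkn hP ha1 hsz hank hka (n - s) (by omega)
    rw [show n - (n - s) = s by omega] at this
    exact this
  have hGmono_s : ∀ s s', s ≤ s' → s' ≤ n → ∀ c, G s c ≤ G s' c := by
    intro s s' hss hs'n c
    exact chain_anti hn hk1 hkn hP ha1 hsz hank hka (n - s) (by omega) (n - s') (by omega) c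
  have hstep_s : ∀ s, 1 ≤ s → s ≤ n → ∀ c, G s c ≤ G (s-1) c + 1 := by
    intro s h1 h2 c
    have hb := (chain_between hn hk1 hkn hP ha1 hsz hank hka (n - s) (by omega)).2 c
    have e1 : n - s + 1 = n - (s - 1) := by omega
    rw [e1] at hb
    exact hb
  have hG0 : ∀ c, G 0 c = 0 := by
    intro c
    have := (hInv 0 (Nat.zero_le n)).ub c
    omega
  have hGn : ∀ c, G n c = colH n P c := by
    intro c
    simp only [hG, Nat.sub_self, chainG_zero]
  have hGjle : ∀ s, s ≤ n → ∀ c c', c ≤ c' → G s c' ≤ G s c := by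
    intro s hs c c' hcc
    exact anti_of_succ (hInv s hs).mono hcc
  set T : ℕ → ℕ → ℕ := fun i c => sInf {s | i + 1 ≤ G s c} with hT
  have hin : ∀ i c, c < P i → i < n := by
    intro i c hc
    by_contra hcon
    have := hP.2 i (by omega)
    omega
  have hmemn : ∀ i c, c < P i → i + 1 ≤ G n c := by
    intro i c hc
    have h1 := hin i c hc
    have := (colH_lt_iff hP c i).mpr ⟨h1, hc⟩
    rw [hGn]
    omega
  have hne : ∀ i c, c < P i → {s | i + 1 ≤ G s c}.Nonempty := by
    intro i c hc
    exact ⟨n, hmemn i c hc⟩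
  have hTmem : ∀ i c, c < P i → i + 1 ≤ G (T i c) c := by
    intro i c hc
    have := Nat.sInf_mem (hne i c hc)
    exact this
  have hTle : ∀ i c, c < P i → T i c ≤ n := by
    intro i c hc
    exact Nat.sInf_le (hmemn i c hc)
  have hTpos : ∀ i c, c < P i → 1 ≤ T i c := by
    intro i c hc
    by_contra hcon
    have h1 : T i c = 0 := by omega
    have h2 := hTmem i c hc
    rw [h1, hG0] at h2
    omega
  have hTmin : ∀ i c, ∀ t, t < T i c → ¬ (i + 1 ≤ G t c) := by
    intro i c t ht hle
    have ht' : t < sInf {s | i + 1 ≤ G s c} := ht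
    exact Nat.notMem_of_lt_sInf ht' (show t ∈ {s | i + 1 ≤ G s c} from hle)
  -- semistandardness
  have hrow : ∀ i j, j + 1 < P i → T i j ≤ T i (j+1) := by
    intro i j hj
    have hc1 : j < P i := by omega
    have m1 := hTmem i (j+1) hj
    have m2 : T i (j+1) ≤ n := hTle i (j+1) hj
    have m3 : i + 1 ≤ G (T i (j+1)) j :=
      le_trans m1 (hGjle (T i (j+1)) m2 j (j+1) (by omega))
    exact Nat.sInf_le m3
  have hcolrel : ∀ i j, j < P (i+1) → T i j < T (i+1) j := by
    intro i j hj
    have hc1 : j < P i := lt_of_lt_of_le hj (hP.1 i)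
    have m1 := hTmem (i+1) j hj
    have m2 : T (i+1) j ≤ n := hTle (i+1) j hj
    have m4 : 1 ≤ T (i+1) j := hTpos (i+1) j hj
    have m5 := hstep_s (T (i+1) j) m4 m2 j
    have m6 : i + 1 ≤ G (T (i+1) j - 1) j := by omega
    have m7 : T i j ≤ T (i+1) j - 1 := Nat.sInf_le m6
    omega
  -- the column characterisation
  have hcol : ∀ s, 1 ≤ s → s ≤ n → ∀ c,
      (Finset.range n).filter (fun i => c < P i ∧ T i c = s)
        = Finset.Ico (G (s-1) c) (G s c) := by
    intro s h1 h2 c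
    ext i
    simp only [Finset.mem_filter, Finset.mem_range, Finset.mem_Ico]
    constructor
    · rintro ⟨hi, hcP, hTs⟩
      have m1 := hTmem i c hcP
      rw [hTs] at m1
      have m2 := hTmin i c (s-1) (by omega)
      omega
    · rintro ⟨hlo, hhi⟩
      have m0 : i + 1 ≤ G n c := by
        have := hGmono_s s n h2 le_rfl c
        omega
      have m1 : i < colH n P c := by
        rw [← hGn c]; omega
      obtain ⟨hiln, hicP⟩ := (colH_lt_iff hP c i).mp m1
      refine ⟨hiln, hicP, ?_⟩
      have m2 : T i c ≤ s := Nat.sInf_le (by omega : i + 1 ≤ G s c)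
      have m3 : ¬ T i c < s := by
        intro hlt
        have m4 := hTmem i c hicP
        have m5 : G (T i c) c ≤ G (s-1) c := hGmono_s (T i c) (s-1) (by omega) (by omega) c
        omega
      omega
  have hcnt_col : ∀ s, 1 ≤ s → s ≤ n → ∀ c,
      ((Finset.range n).filter (fun i => c < P i ∧ T i c = s)).card = G s c - G (s-1) c := by
    intro s h1 h2 c
    rw [hcol s h1 h2 c, Nat.card_Ico]
  -- balancedness
  have hcntAll : ∀ s, 1 ≤ s → s ≤ n → cntAll n P (fun _ => 0) T s = a := by
    intro s h1 h2
    have e0 : cntAll n P (fun _ => 0) T s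
        = ∑ i ∈ Finset.range n, ((Finset.Ico 0 (P i)).filter (fun c => T i c = s)).card := rfl
    rw [e0, sum_rows_eq_sum_cols n (P 0) P (fun i _ => anti_of_succ hP.1 (Nat.zero_le i))
      (fun i c => T i c = s)]
    rw [Finset.sum_congr rfl (fun c _ => hcnt_col s h1 h2 c)]
    rw [Finset.sum_tsub_distrib _ (fun c _ => hGmono_s (s-1) s (by omega) h2 c)]
    rw [(hInv s h2).sum, (hInv (s-1) (by omega)).sum]
    obtain ⟨t, rfl⟩ : ∃ t, s = t + 1 := ⟨s - 1, by omega⟩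
    have : (t + 1) * a = t * a + a := by ring
    simp only [Nat.add_sub_cancel]
    omega
  have hskew : skewSize n P (fun _ => 0) = n * a := by
    unfold skewSize
    rw [← hsz]
    unfold ysize
    apply Finset.sum_congr rfl
    intro i _
    simp
  have hbal : BalancedF n P (fun _ => 0) T 1 n := by
    intro s h1 h2
    rw [hcntAll s h1 h2, hskew]
    simp
  -- pinned values for small symbols
  have hGpin : ∀ s, s ≤ k → ∀ c, G s c = if c < a then s else 0 := by
    intro s hsk c
    have hsn : s ≤ n := le_trans hsk hkn
    have hmin : min s k = s := by omega
    by_cases hca : c < a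
    · have l1 := (hInv s hsn).lo c hca
      have l2 := (hInv s hsn).ub c
      rw [hmin] at l1
      rw [if_pos hca]
      omega
    · have l1 := (hInv s hsn).hi c (by omega)
      rw [hmin] at l1
      rw [if_neg hca]
      omega
  have hcntCols : ∀ s, 1 ≤ s → s ≤ k → ∀ j, cntCols n P (fun _ => 0) T s j
      = ∑ c ∈ Finset.range (P 0), (if c < j ∧ c < a then 1 else 0) := by
    intro s h1 h2 j
    have e0 : cntCols n P (fun _ => 0) T s j
        = ∑ i ∈ Finset.range n, ((Finset.Ico 0 (min j (P i))).filter (fun c => T i c = s)).card := rfl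
    rw [e0, sum_rows_eq_sum_cols n (P 0) (fun i => min j (P i))
      (fun i _ => le_trans (min_le_right _ _) (anti_of_succ hP.1 (Nat.zero_le i)))
      (fun i c => T i c = s)]
    apply Finset.sum_congr rfl
    intro c hc
    by_cases hcj : c < j
    · have e1 : (Finset.range n).filter (fun i => c < min j (P i) ∧ T i c = s)
          = (Finset.range n).filter (fun i => c < P i ∧ T i c = s) := by
        apply Finset.filter_congr
        intro i _
        simp only [lt_min_iff]
        constructor
        · rintro ⟨⟨_, h⟩, h'⟩; exact ⟨h, h'⟩
        · rintro ⟨h, h'⟩; exact ⟨⟨hcj, h⟩, h'⟩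
      rw [e1, hcnt_col s h1 (le_trans h2 hkn) c]
      rw [hGpin s h2 c, hGpin (s-1) (by omega) c]
      by_cases hca : c < a
      · rw [if_pos hca, if_pos hca, if_pos ⟨hcj, hca⟩]
        omega
      · rw [if_neg hca, if_neg hca, if_neg (by tauto)]
    · have e1 : (Finset.range n).filter (fun i => c < min j (P i) ∧ T i c = s) = ∅ := by
        rw [Finset.filter_eq_empty_iff]
        intro i _
        simp only [lt_min_iff]
        rintro ⟨⟨h, _⟩, _⟩
        omega
      rw [e1, if_neg (by tauto)]
      simp
  refine ⟨T, ⟨?_, ?_⟩, ?_, hbal, ?_⟩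
  · intro i j _ hj
    exact hrow i j hj
  · intro i j _ hj
    exact hcolrel i j hj
  · intro i j _ hj
    exact ⟨hTpos i j hj, hTle i j hj⟩
  · intro i h1 h2 j
    rw [hcntCols i h1 (by omega) j, hcntCols (i+1) (by omega) (by omega) j]

end BWDMAIN

/-- A Young diagram `P` of order `n` admits a balanced semistandard `{1, …, n}`-filling
that is `α_i`-codominant for all `i = 1, …, k-1` if and only if its offset
`a = (#P)/n` is an integer satisfying `#_k P ≥ a ≥ #_{n-k+1} P`. -/
theorem stmt_5 (n k : ℕ) (hn : 1 ≤ n) (hk1 : 1 ≤ k) (hkn : k ≤ n)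
    (P : ℕ → ℕ) (hP : IsYoung n P) :
    (∃ T : ℕ → ℕ → ℕ, SkewSemistd P (fun _ => 0) T ∧ InAlpha P (fun _ => 0) T 1 n ∧
        BalancedF n P (fun _ => 0) T 1 n ∧
        ∀ i, 1 ≤ i → i < k → Codom n P (fun _ => 0) T i) ↔
    (∃ a : ℕ, ysize n P = n * a ∧ P (n - k) ≤ a ∧ a ≤ P (k - 1)) := by
  constructor
  · rintro ⟨T, hss, hal, hbal, hcod⟩
    exact forward_main hn hk1 hkn hP hss hal hbal hcod
  · rintro ⟨a, hsz, hank, hka⟩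
    exact backward_main hn hk1 hkn hP hsz hank hka
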